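/- For every n × n doubly stochastic matrix D, the minimal radius r_F(D) = max_{D' ∈ Ω_n} ‖D − D'‖_F of a bounding ball of Ω_n centered at D relative to the Frobenius norm satisfies n − 1 ≤ r_F(D)² ≤ 2n. -/

import Mathlib

open Matrix BigOperators

/-- The matrix `J_n` with all entries equal to `1/n`. -/
noncomputable def matJ (n : ℕ) : Matrix (Fin n) (Fin n) ℝ :=
  Matrix.of fun _ _ => (n : ℝ)⁻¹

/-- The singular values of a real square matrix: the square roots of the
eigenvalues of `Aᴴ * A` (`Aᴴ = Aᵀ` over `ℝ`). -/
noncomputable def singularValues {n : ℕ} (A : Matrix (Fin n) (Fin n) ℝ) : Fin n → ℝ :=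
  fun i => Real.sqrt ((show (Aᵀ * A).IsHermitian by
    simpa using Matrix.isHermitian_conjTranspose_mul_self A).eigenvalues i)

/-- The Schatten `p`-norm of a real square matrix. -/
noncomputable def schattenNorm {n : ℕ} (p : ℝ) (A : Matrix (Fin n) (Fin n) ℝ) : ℝ :=
  (∑ i, singularValues A i ^ p) ^ (1 / p)

/-- The Frobenius norm of a real square matrix. -/
noncomputable def frobNorm {n : ℕ} (A : Matrix (Fin n) (Fin n) ℝ) : ℝ :=
  Real.sqrt (∑ i, ∑ j, (A i j) ^ 2)

/-- The minimal trace of a square matrix: the minimum over all permutations `σ`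
of `∑ i, A i (σ i)`. -/
noncomputable def trMin {n : ℕ} (A : Matrix (Fin n) (Fin n) ℝ) : ℝ :=
  ⨅ σ : Equiv.Perm (Fin n), ∑ i, A i (σ i)

/-- A matrix is a permutation matrix if it is the matrix of some permutation. -/
def IsPermMatrix {n : ℕ} (P : Matrix (Fin n) (Fin n) ℝ) : Prop :=
  ∃ σ : Equiv.Perm (Fin n), P = σ.permMatrix ℝ

section Aux

variable {n : ℕ}

lemma frobSq_le (D : Matrix (Fin n) (Fin n) ℝ) (hD : D ∈ doublyStochastic ℝ (Fin n)) :
    ∑ i, ∑ j, (D i j) ^ 2 ≤ (n : ℝ) := by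
  rw [mem_doublyStochastic_iff_sum] at hD
  have step : ∑ i, ∑ j, (D i j) ^ 2 ≤ ∑ i : Fin n, ∑ j, D i j := by
    refine Finset.sum_le_sum fun i _ => Finset.sum_le_sum fun j _ => ?_
    have h0 := hD.1 i j
    have h1 : D i j ≤ 1 := by
      have h2 : D i j ≤ ∑ j', D i j' :=
        Finset.single_le_sum (fun j' _ => hD.1 i j') (Finset.mem_univ j)
      rw [hD.2.1 i] at h2
      exact h2
    nlinarith
  have heq : ∑ i : Fin n, ∑ j, D i j = (n : ℝ) := by simp [hD.2.1]
  linarith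

lemma one_le_frobSq (D : Matrix (Fin n) (Fin n) ℝ) (hn : 0 < n)
    (hD : D ∈ doublyStochastic ℝ (Fin n)) :
    1 ≤ ∑ i, ∑ j, (D i j) ^ 2 := by
  rw [mem_doublyStochastic_iff_sum] at hD
  have key : ∀ i, (1 : ℝ) / n ≤ ∑ j, (D i j) ^ 2 := by
    intro i
    have := sq_sum_le_card_mul_sum_sq (s := Finset.univ) (f := D i)
    rw [hD.2.1 i] at this
    simp only [Finset.card_univ, Fintype.card_fin] at this
    rw [div_le_iff₀ (by positivity)]
    nlinarith [this]
  calc (1 : ℝ) = ∑ _i : Fin n, (1 : ℝ) / n := by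
        rw [Finset.sum_const, Finset.card_univ, Fintype.card_fin, nsmul_eq_mul,
          mul_one_div_cancel (Nat.cast_ne_zero.mpr hn.ne')]
    _ ≤ ∑ i, ∑ j, (D i j) ^ 2 := Finset.sum_le_sum fun i _ => key i

end Aux

/-- For `D` doubly stochastic, with
`r_F(D) = max_{D' ∈ Ω_n} ‖D − D'‖_F`, one has `n − 1 ≤ r_F(D)² ≤ 2n`. -/
theorem frob_bounding_radius_sq_bounds {n : ℕ} (D : Matrix (Fin n) (Fin n) ℝ)
    (hD : D ∈ doublyStochastic ℝ (Fin n)) :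
    (n : ℝ) - 1 ≤
        sSup {r : ℝ | ∃ D' ∈ doublyStochastic ℝ (Fin n), r = frobNorm (D - D')} ^ 2 ∧
      sSup {r : ℝ | ∃ D' ∈ doublyStochastic ℝ (Fin n), r = frobNorm (D - D')} ^ 2 ≤
        2 * n := by
  set S := {r : ℝ | ∃ D' ∈ doublyStochastic ℝ (Fin n), r = frobNorm (D - D')} with hS
  have hne : S.Nonempty := ⟨frobNorm (D - D), D, hD, rfl⟩
  have hmem_sq : ∀ D' ∈ doublyStochastic ℝ (Fin n),
      ∑ i, ∑ j, ((D - D') i j) ^ 2 ≤ 2 * n := by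
    intro D' hD'
    have h1 := frobSq_le D hD
    have h2 := frobSq_le D' hD'
    have hDn := (mem_doublyStochastic_iff_sum.mp hD).1
    have hD'n := (mem_doublyStochastic_iff_sum.mp hD').1
    have step : ∑ i, ∑ j, ((D - D') i j) ^ 2 ≤
        (∑ i, ∑ j, (D i j) ^ 2) + ∑ i, ∑ j, (D' i j) ^ 2 := by
      rw [← Finset.sum_add_distrib]
      refine Finset.sum_le_sum fun i _ => ?_
      rw [← Finset.sum_add_distrib]
      refine Finset.sum_le_sum fun j _ => ?_
      have := mul_nonneg (hDn i j) (hD'n i j)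
      simp only [Matrix.sub_apply]
      nlinarith
    linarith
  have hub : ∀ r ∈ S, r ≤ Real.sqrt (2 * n) := by
    rintro r ⟨D', hD', rfl⟩
    unfold frobNorm
    exact Real.sqrt_le_sqrt (hmem_sq D' hD')
  have hbdd : BddAbove S := ⟨Real.sqrt (2 * n), hub⟩
  have hsup_nonneg : 0 ≤ sSup S := by
    rcases hne with ⟨r, hr⟩
    have hr0 : 0 ≤ r := by
      obtain ⟨D', hD', rfl⟩ := hr
      exact Real.sqrt_nonneg _
    exact le_trans hr0 (le_csSup hbdd hr)
  constructor
  · rcases Nat.eq_zero_or_pos n with hn | hn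
    · subst hn
      simpa using le_trans (by norm_num : (0:ℝ) - 1 ≤ 0) (sq_nonneg (sSup S))
    · have : NeZero n := ⟨hn.ne'⟩
      obtain ⟨k, hk⟩ : ∃ k : Fin n, ∑ i, D i (i + k) ≤ 1 := by
        by_contra hcon
        push_neg at hcon
        have htot : ∑ k : Fin n, ∑ i, D i (i + k) = (n : ℝ) := by
          rw [Finset.sum_comm]
          have hrow : ∀ i : Fin n, ∑ k : Fin n, D i (i + k) = 1 := by
            intro i
            have := Equiv.sum_comp (Equiv.addLeft i) (D i)
            simp only [Equiv.coe_addLeft] at this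
            rw [this, (mem_doublyStochastic_iff_sum.mp hD).2.1 i]
          simp [hrow]
        have hlt : (n : ℝ) < ∑ k : Fin n, ∑ i, D i (i + k) := by
          calc (n : ℝ) = ∑ _k : Fin n, (1 : ℝ) := by simp
          _ < _ := Finset.sum_lt_sum_of_nonempty
              (Finset.univ_nonempty) (fun k _ => hcon k)
        linarith [htot]
      set P : Matrix (Fin n) (Fin n) ℝ :=
        Matrix.of (fun i j => if j = i + k then (1:ℝ) else 0) with hP
      have hPmem : P ∈ doublyStochastic ℝ (Fin n) := by
        rw [mem_doublyStochastic_iff_sum]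
        refine ⟨fun i j => by dsimp [P]; split <;> norm_num, fun i => by simp [P], fun j => ?_⟩
        have hcol : ∀ i : Fin n, (P i j) = if i = j - k then (1:ℝ) else 0 := by
          intro i
          dsimp [P]
          congr 1
          simp only [eq_iff_iff]
          constructor
          · rintro rfl; simp
          · rintro rfl; simp
        simp [hcol]
      have hcalc : ∑ i, ∑ j, ((D - P) i j) ^ 2 =
          (∑ i, ∑ j, (D i j) ^ 2) - 2 * (∑ i, D i (i + k)) + n := by
        have hrow : ∀ i, ∑ j, ((D - P) i j) ^ 2 =
            (∑ j, (D i j) ^ 2) - 2 * D i (i + k) + 1 := by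
          intro i
          have expand : ∀ j, ((D - P) i j) ^ 2 =
              (D i j) ^ 2 - 2 * (D i j * P i j) + (P i j) ^ 2 := by
            intro j; simp only [Matrix.sub_apply]; ring
          simp only [expand]
          rw [Finset.sum_add_distrib, Finset.sum_sub_distrib, ← Finset.mul_sum]
          have h1 : ∑ j, D i j * P i j = D i (i + k) := by
            dsimp [P]
            simp [mul_ite]
          have h2 : ∑ j, (P i j) ^ 2 = 1 := by
            dsimp [P]
            simp [ite_pow]
          rw [h1, h2]
        simp only [hrow]
        rw [Finset.sum_add_distrib, Finset.sum_sub_distrib, ← Finset.mul_sum]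
        simp
      have hge : (n : ℝ) - 1 ≤ ∑ i, ∑ j, ((D - P) i j) ^ 2 := by
        have h1 := one_le_frobSq D hn hD
        rw [hcalc]; linarith
      have hsum_nonneg : (0:ℝ) ≤ ∑ i, ∑ j, ((D - P) i j) ^ 2 :=
        Finset.sum_nonneg fun i _ => Finset.sum_nonneg fun j _ => sq_nonneg _
      have hmemS : frobNorm (D - P) ∈ S := ⟨P, hPmem, rfl⟩
      have hle : frobNorm (D - P) ≤ sSup S := le_csSup hbdd hmemS
      have hsq : (frobNorm (D - P)) ^ 2 = ∑ i, ∑ j, ((D - P) i j) ^ 2 :=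
        Real.sq_sqrt hsum_nonneg
      calc (n : ℝ) - 1 ≤ (frobNorm (D - P)) ^ 2 := by rw [hsq]; exact hge
        _ ≤ (sSup S) ^ 2 := pow_le_pow_left₀ (Real.sqrt_nonneg _) hle 2
  · have h1 : sSup S ≤ Real.sqrt (2 * n) := csSup_le hne hub
    calc (sSup S) ^ 2 ≤ (Real.sqrt (2 * n)) ^ 2 := pow_le_pow_left₀ hsup_nonneg h1 2
      _ = 2 * n := Real.sq_sqrt (by positivity)
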